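/- Let J = diag(J1,J2,J3) with J1,J2,J3 > 0 and E(w) := J^{-1}(Jw × w). Let (R, ω) solve the free-rotation dynamics R'(t) = R(t)·[ω(t)]ₓ, ω'(t) = E(ω(t)) with R(t₀) ∈ SO(3). Assume ω is periodic with some period τ > 0 and the image {ω(t) : t ∈ ℝ} is not contained in any affine plane of ℝ³. Let å ∈ ℝ³ be any unit vector and a(t) := R(t)ᵀ·å. Then there exist T > 0 and μ ∈ (0,1) such that the persistent excitation condition holds: (1/T)·∫_t^{t+T} [a(s)]ₓᵀ[a(s)]ₓ ds ≥ μ·I for all t. -/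

import Mathlib

open Matrix MeasureTheory intervalIntegral

noncomputable section

attribute [local instance] Matrix.normedAddCommGroup Matrix.normedSpace

/-- Cross product on ℝ³. -/
def cross3 (x y : Fin 3 → ℝ) : Fin 3 → ℝ :=
  ![x 1 * y 2 - x 2 * y 1, x 2 * y 0 - x 0 * y 2, x 0 * y 1 - x 1 * y 0]

/-- Euclidean norm on ℝ³. -/
def enorm3 (x : Fin 3 → ℝ) : ℝ := Real.sqrt (∑ i, (x i) ^ 2)

/-- Skew-symmetric cross-product matrix `[x]ₓ`. -/
def skew3 (x : Fin 3 → ℝ) : Matrix (Fin 3) (Fin 3) ℝ :=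
  !![0, -x 2, x 1; x 2, 0, -x 0; -x 1, x 0, 0]

/-- Persistent excitation condition with parameters `T, μ`. -/
def PE (a : ℝ → Fin 3 → ℝ) (T μ : ℝ) : Prop :=
  ∀ t : ℝ,
    ((T⁻¹ • ∫ τ in t..(t + T), (skew3 (a τ))ᵀ * skew3 (a τ)) -
      μ • (1 : Matrix (Fin 3) (Fin 3) ℝ)).PosSemidef

/-- Squared Euclidean norm on ℝ⁶ = ℝ³ × ℝ³. -/
def nrm6sq (Z : Fin 3 ⊕ Fin 3 → ℝ) : ℝ := ∑ i, (Z i) ^ 2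

/-- The 6×6 block matrix `A = [[−I, [a]ₓ], [[a]ₓ, 0]]`. -/
def Amat (a : Fin 3 → ℝ) : Matrix (Fin 3 ⊕ Fin 3) (Fin 3 ⊕ Fin 3) ℝ :=
  Matrix.fromBlocks (-1) (skew3 a) (skew3 a) 0

/- ### Auxiliary lemmas -/

lemma skew3_transpose (w : Fin 3 → ℝ) : (skew3 w)ᵀ = skew3 (-w) := by
  ext i j; fin_cases i <;> fin_cases j <;> simp [skew3]

lemma quad_form (w x : Fin 3 → ℝ) :
    x ⬝ᵥ (((skew3 w)ᵀ * skew3 w) *ᵥ x) = (∑ i, w i ^2) * (∑ i, x i ^2) - (w ⬝ᵥ x)^2 := by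
  rw [skew3_transpose]
  simp [skew3, Matrix.mulVec, Matrix.mul_apply, dotProduct, Fin.sum_univ_three]
  ring

lemma cross3_smul (c : ℝ) (x w : Fin 3 → ℝ) : cross3 (c • x) w = c • cross3 x w := by
  funext i; fin_cases i <;> simp [cross3] <;> ring

lemma cross3_sub (b b' w : Fin 3 → ℝ) : cross3 (b - b') w = cross3 b w - cross3 b' w := by
  funext i; fin_cases i <;> simp [cross3] <;> ring

lemma cross3_eq_zero_imp (x w : Fin 3 → ℝ) (hx : ∑ i, x i ^2 = 1)
    (h : cross3 x w = 0) : w = (w ⬝ᵥ x) • x := by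
  have h0 := congrFun h 0
  have h1 := congrFun h 1
  have h2 := congrFun h 2
  simp [cross3] at h0 h1 h2
  simp [Fin.sum_univ_three] at hx
  funext i
  fin_cases i
  · show w 0 = (w ⬝ᵥ x) * x 0
    simp [dotProduct, Fin.sum_univ_three]
    linear_combination (-(w 0)) * hx - x 1 * h2 + x 2 * h1
  · show w 1 = (w ⬝ᵥ x) * x 1
    simp [dotProduct, Fin.sum_univ_three]
    linear_combination (-(w 1)) * hx - x 2 * h0 + x 0 * h2
  · show w 2 = (w ⬝ᵥ x) * x 2
    simp [dotProduct, Fin.sum_univ_three]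
    linear_combination (-(w 2)) * hx - x 0 * h1 + x 1 * h0

lemma sumSq_mulVec_eq (A : Matrix (Fin 3) (Fin 3) ℝ) (h : Aᵀ * A = 1) (u : Fin 3 → ℝ) :
    ∑ i, ((A *ᵥ u) i)^2 = ∑ i, u i ^2 := by
  have e : ∀ i j, (Aᵀ * A) i j = (1 : Matrix (Fin 3) (Fin 3) ℝ) i j := fun i j => by rw [h]
  have h00 := e 0 0; have h01 := e 0 1; have h02 := e 0 2
  have h11 := e 1 1; have h12 := e 1 2; have h22 := e 2 2
  simp [Matrix.mul_apply, Fin.sum_univ_three, Matrix.one_apply, Matrix.transpose_apply]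
    at h00 h01 h02 h11 h12 h22
  simp [Matrix.mulVec, dotProduct, Fin.sum_univ_three]
  linear_combination (u 0)^2*h00 + (u 1)^2*h11 + (u 2)^2*h22 + 2*u 0*u 1*h01
    + 2*u 0*u 2*h02 + 2*u 1*u 2*h12

lemma polar3 (M : Matrix (Fin 3) (Fin 3) ℝ)
    (h : ∀ u, ∑ i, ((M *ᵥ u) i)^2 = ∑ i, u i ^2) : Mᵀ * M = 1 := by
  have k : ∀ u : Fin 3 → ℝ,
      ((M *ᵥ u) 0)^2 + ((M *ᵥ u) 1)^2 + ((M *ᵥ u) 2)^2 = u 0 ^2 + u 1 ^2 + u 2 ^2 := by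
    intro u; have := h u; simpa [Fin.sum_univ_three] using this
  have k1 := k ![1,0,0]; have k2 := k ![0,1,0]; have k3 := k ![0,0,1]
  have k4 := k ![1,1,0]; have k5 := k ![1,0,1]; have k6 := k ![0,1,1]
  simp [Matrix.mulVec, dotProduct, Fin.sum_univ_three] at k1 k2 k3 k4 k5 k6
  ext i j
  fin_cases i <;> fin_cases j <;>
    simp [Matrix.mul_apply, Fin.sum_univ_three, Matrix.one_apply, Matrix.transpose_apply] <;>
    linarith [k1, k2, k3, k4, k5, k6]

lemma cross3_norm_le (d w : Fin 3 → ℝ) {B : ℝ} (hB : 0 ≤ B) (hw : ∀ i, |w i| ≤ B) :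
    ‖cross3 d w‖ ≤ 2 * B * ‖d‖ := by
  have hd : ∀ i, |d i| ≤ ‖d‖ := fun i => by simpa using norm_le_pi_norm d i
  have hd0 : (0:ℝ) ≤ ‖d‖ := norm_nonneg _
  have key : ∀ p q r s : ℝ, |p| ≤ ‖d‖ → |q| ≤ ‖d‖ → |r| ≤ B → |s| ≤ B →
      |p * r - q * s| ≤ 2 * B * ‖d‖ := by
    intro p q r s hp hq hr hs
    calc |p * r - q * s| ≤ |p * r| + |q * s| := abs_sub _ _
      _ = |p| * |r| + |q| * |s| := by rw [abs_mul, abs_mul]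
      _ ≤ ‖d‖ * B + ‖d‖ * B := add_le_add
          (mul_le_mul hp hr (abs_nonneg _) hd0) (mul_le_mul hq hs (abs_nonneg _) hd0)
      _ = 2 * B * ‖d‖ := by ring
  rw [pi_norm_le_iff_of_nonneg (by positivity)]
  intro i
  fin_cases i
  · simpa [cross3] using key (d 1) (d 2) (w 2) (w 1) (hd 1) (hd 2) (hw 2) (hw 1)
  · simpa [cross3] using key (d 2) (d 0) (w 0) (w 2) (hd 2) (hd 0) (hw 0) (hw 2)
  · simpa [cross3] using key (d 0) (d 1) (w 1) (w 0) (hd 0) (hd 1) (hw 1) (hw 0)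

lemma hasDerivAt_entry (R : ℝ → Matrix (Fin 3) (Fin 3) ℝ) (M : Matrix (Fin 3) (Fin 3) ℝ)
    (t : ℝ) (hR : HasDerivAt R M t) (i j : Fin 3) :
    HasDerivAt (fun s => R s i j) (M i j) t := by
  have h := (((ContinuousLinearMap.proj (R := ℝ) (φ := fun _ : Fin 3 => ℝ) j).comp
      (ContinuousLinearMap.proj (R := ℝ) (φ := fun _ : Fin 3 => (Fin 3 → ℝ)) i)).hasFDerivAt
      (x := R t)).comp_hasDerivAt t hR
  exact h

lemma hasDerivAt_av (R : ℝ → Matrix (Fin 3) (Fin 3) ℝ) (ω : ℝ → Fin 3 → ℝ) (t : ℝ)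
    (hR : HasDerivAt R (R t * skew3 (ω t)) t) (v : Fin 3 → ℝ) :
    HasDerivAt (fun s => (R s)ᵀ *ᵥ v) (cross3 ((R t)ᵀ *ᵥ v) (ω t)) t := by
  rw [hasDerivAt_pi]
  intro i
  have hent : ∀ j, HasDerivAt (fun s => R s j i) ((R t * skew3 (ω t)) j i) t :=
    fun j => hasDerivAt_entry R _ t hR j i
  have hsum : HasDerivAt (fun s => R s 0 i * v 0 + R s 1 i * v 1 + R s 2 i * v 2)
      ((R t * skew3 (ω t)) 0 i * v 0 + (R t * skew3 (ω t)) 1 i * v 1 +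
        (R t * skew3 (ω t)) 2 i * v 2) t :=
    (((hent 0).mul_const (v 0)).add ((hent 1).mul_const (v 1))).add ((hent 2).mul_const (v 2))
  have heq : (fun s => ((R s)ᵀ *ᵥ v) i) =
      fun s => R s 0 i * v 0 + R s 1 i * v 1 + R s 2 i * v 2 := by
    funext s
    simp [Matrix.mulVec, dotProduct, Fin.sum_univ_three, Matrix.transpose_apply]
  rw [heq]
  refine hsum.congr_deriv ?_
  fin_cases i <;>
    simp [cross3, skew3, Matrix.mul_apply, Matrix.mulVec, dotProduct, Fin.sum_univ_three,
      Matrix.transpose_apply] <;> ring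

lemma shift_lemma (R : ℝ → Matrix (Fin 3) (Fin 3) ℝ) (ω : ℝ → Fin 3 → ℝ)
    (hRode : ∀ t, HasDerivAt R (R t * skew3 (ω t)) t)
    (B : ℝ) (hB : 0 ≤ B) (hω : ∀ t i, |ω t i| ≤ B)
    (t₀ τp : ℝ) (hper : ∀ t, ω (t + τp) = ω t)
    (v w : Fin 3 → ℝ)
    (hinit : (R (t₀ + τp))ᵀ *ᵥ v = (R t₀)ᵀ *ᵥ w) :
    ∀ t, (R (t + τp))ᵀ *ᵥ v = (R t)ᵀ *ᵥ w := by
  intro t1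
  have hlip : ∀ s : ℝ, LipschitzOnWith (Real.toNNReal (2 * B))
      (fun b : Fin 3 → ℝ => cross3 b (ω s)) Set.univ := by
    intro s
    apply LipschitzWith.lipschitzOnWith
    apply LipschitzWith.of_dist_le_mul
    intro b b'
    rw [dist_eq_norm, dist_eq_norm, ← cross3_sub]
    calc ‖cross3 (b - b') (ω s)‖ ≤ 2 * B * ‖b - b'‖ :=
          cross3_norm_le _ _ hB (hω s)
      _ = (Real.toNNReal (2 * B)) * ‖b - b'‖ := by
          rw [Real.coe_toNNReal _ (by linarith)]
  set f : ℝ → Fin 3 → ℝ := fun s => (R (s + τp))ᵀ *ᵥ v with hf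
  set g : ℝ → Fin 3 → ℝ := fun s => (R s)ᵀ *ᵥ w with hg
  have hfd : ∀ s : ℝ, HasDerivAt f (cross3 (f s) (ω s)) s := by
    intro s
    have h1 := (hasDerivAt_av R ω (s + τp) (hRode (s + τp)) v).comp_add_const s τp
    simpa [hper s] using h1
  have hgd : ∀ s : ℝ, HasDerivAt g (cross3 (g s) (ω s)) s :=
    fun s => hasDerivAt_av R ω s (hRode s) w
  have hmem : t₀ ∈ Set.Ioo (min t₀ t1 - 1) (max t₀ t1 + 1) := by
    constructor
    · have := min_le_left t₀ t1; linarith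
    · have := le_max_left t₀ t1; linarith
  have huniq := ODE_solution_unique_of_mem_Icc (s := fun _ => (Set.univ : Set (Fin 3 → ℝ)))
    (fun s _ => hlip s) hmem
    (continuousOn_of_forall_continuousAt fun s _ => (hfd s).continuousAt)
    (fun s _ => hfd s) (fun _ _ => trivial)
    (continuousOn_of_forall_continuousAt fun s _ => (hgd s).continuousAt)
    (fun s _ => hgd s) (fun _ _ => trivial)
    hinit
  have ht1 : t1 ∈ Set.Icc (min t₀ t1 - 1) (max t₀ t1 + 1) := by
    constructor
    · have := min_le_right t₀ t1; linarith
    · have := le_max_right t₀ t1; linarith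
  exact huniq ht1

/-- for a Type 3 free-rotation trajectory (ω periodic and not contained
in any affine plane), the measurement `a(t) = R(t)ᵀå` satisfies the persistent
excitation condition for some parameters `T > 0`, `μ ∈ (0,1)`, whatever the unit
reference vector `å`. -/
theorem type3_PE
    (J1 J2 J3 : ℝ) (hJ1 : 0 < J1) (hJ2 : 0 < J2) (hJ3 : 0 < J3)
    (J : Matrix (Fin 3) (Fin 3) ℝ) (hJ : J = Matrix.diagonal ![J1, J2, J3])
    (E : (Fin 3 → ℝ) → Fin 3 → ℝ)
    (hE : ∀ w, E w = J⁻¹.mulVec (cross3 (J.mulVec w) w))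
    (t₀ : ℝ)
    (R : ℝ → Matrix (Fin 3) (Fin 3) ℝ) (ω : ℝ → Fin 3 → ℝ)
    (hRode : ∀ t, HasDerivAt R (R t * skew3 (ω t)) t)
    (hωode : ∀ t, HasDerivAt ω (E (ω t)) t)
    (hR₀orth : (R t₀)ᵀ * R t₀ = 1) (hR₀det : (R t₀).det = 1)
    (τp : ℝ) (hτp : 0 < τp) (hper : ∀ t, ω (t + τp) = ω t)
    (hnonplanar : ¬ ∃ (n : Fin 3 → ℝ) (b : ℝ), n ≠ 0 ∧ ∀ t, n ⬝ᵥ ω t = b)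
    (aring : Fin 3 → ℝ) (haring : enorm3 aring = 1)
    (a : ℝ → Fin 3 → ℝ) (ha : ∀ t, a t = (R t)ᵀ.mulVec aring) :
    ∃ T μ : ℝ, 0 < T ∧ 0 < μ ∧ μ < 1 ∧ PE a T μ := by
  clear hJ1 hJ2 hJ3 hJ hE hR₀det
  -- continuity of `R` and `ω`
  have hRcont : Continuous R :=
    continuous_iff_continuousAt.2 fun t => (hRode t).continuousAt
  have hωcont : Continuous ω :=
    continuous_iff_continuousAt.2 fun t => (hωode t).continuousAt
  clear hωode
  have hRRT : R t₀ * (R t₀)ᵀ = 1 := mul_eq_one_comm.mp hR₀orth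
  -- global bound for ω
  obtain ⟨C, hC⟩ := (isCompact_Icc (a := (0:ℝ)) (b := τp)).exists_bound_of_continuousOn
    hωcont.continuousOn
  have hωper : Function.Periodic ω τp := hper
  have hB0 : (0:ℝ) ≤ max C 0 := le_max_right _ _
  have hωB : ∀ t i, |ω t i| ≤ max C 0 := by
    intro t i
    have hmod := toIcoMod_mem_Ico' hτp t
    have hper2 : ω t = ω (toIcoMod hτp 0 t) := by
      have h2 := hωper.sub_zsmul_eq (toIcoDiv hτp 0 t) (x := t)
      rw [self_sub_toIcoDiv_zsmul] at h2
      exact h2.symm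
    calc |ω t i| = |ω (toIcoMod hτp 0 t) i| := by rw [hper2]
      _ ≤ ‖ω (toIcoMod hτp 0 t)‖ := by simpa using norm_le_pi_norm (ω (toIcoMod hτp 0 t)) i
      _ ≤ C := hC _ ⟨hmod.1, hmod.2.le⟩
      _ ≤ max C 0 := le_max_left _ _
  -- the family of solutions
  set av : (Fin 3 → ℝ) → ℝ → (Fin 3 → ℝ) := fun v s => (R s)ᵀ *ᵥ v with havdef
  have havd : ∀ v t, HasDerivAt (av v) (cross3 (av v t) (ω t)) t :=
    fun v t => hasDerivAt_av R ω t (hRode t) v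
  have hRent : ∀ i j, Continuous fun s => R s i j :=
    fun i j => (continuous_apply j).comp ((continuous_apply i).comp hRcont)
  have havjoint : Continuous fun p : ℝ × (Fin 3 → ℝ) => av p.2 p.1 := by
    apply continuous_pi
    intro i
    have heq : (fun p : ℝ × (Fin 3 → ℝ) => av p.2 p.1 i) =
        fun p => ∑ j, R p.1 j i * p.2 j := by
      funext p
      simp [havdef, Matrix.mulVec, dotProduct, Matrix.transpose_apply]
    rw [heq]
    exact continuous_finset_sum _ fun j _ =>
      ((hRent j i).comp continuous_fst).mul ((continuous_apply j).comp continuous_snd)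
  have havcont : ∀ v, Continuous (av v) :=
    fun v => havjoint.comp (continuous_id.prodMk continuous_const)
  -- norm preservation
  have hsumsq : ∀ v t, ∑ i, (av v t i)^2 = ∑ i, v i ^2 := by
    intro v t
    have hderiv0 : ∀ s : ℝ, HasDerivAt (fun u => ∑ i, (av v u i)^2) 0 s := by
      intro s
      have hc : ∀ i, HasDerivAt (fun u => av v u i) (cross3 (av v s) (ω s) i) s :=
        fun i => hasDerivAt_pi.1 (havd v s) i
      have hsum := HasDerivAt.sum (u := Finset.univ)
        (fun i (_ : i ∈ Finset.univ) => (hc i).pow 2)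
      refine hsum.congr_deriv ?_
      have : ∀ y z : Fin 3 → ℝ, ∑ i, (2:ℕ) * y i ^ (2-1) * cross3 y z i = 0 := by
        intro y z
        simp [cross3, Fin.sum_univ_three]
        ring
      exact this (av v s) (ω s)
    have hconst : (fun u => ∑ i, (av v u i)^2) t = (fun u => ∑ i, (av v u i)^2) t₀ :=
      is_const_of_deriv_eq_zero (fun s => (hderiv0 s).differentiableAt)
        (fun s => (hderiv0 s).deriv) t t₀
    have ht₀ : ∑ i, (av v t₀ i)^2 = ∑ i, v i ^2 := by
      have h1 : ((R t₀)ᵀ)ᵀ * (R t₀)ᵀ = 1 := by rw [Matrix.transpose_transpose]; exact hRRT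
      exact sumSq_mulVec_eq (R t₀)ᵀ h1 v
    calc ∑ i, (av v t i)^2 = ∑ i, (av v t₀ i)^2 := hconst
      _ = ∑ i, v i ^2 := ht₀
  -- orthogonality at `t₀ + τp`
  have hort1 : R (t₀ + τp) * (R (t₀ + τp))ᵀ = 1 := by
    have := polar3 (R (t₀ + τp))ᵀ (fun u => hsumsq u (t₀ + τp))
    rwa [Matrix.transpose_transpose] at this
  have hort2 : (R (t₀ + τp))ᵀ * R (t₀ + τp) = 1 := mul_eq_one_comm.mp hort1
  -- monodromy maps
  set Φ : (Fin 3 → ℝ) → (Fin 3 → ℝ) := fun v => R t₀ *ᵥ ((R (t₀ + τp))ᵀ *ᵥ v) with hΦdef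
  set Ψ : (Fin 3 → ℝ) → (Fin 3 → ℝ) := fun v => R (t₀ + τp) *ᵥ ((R t₀)ᵀ *ᵥ v) with hΨdef
  have hshift : ∀ v t, av v (t + τp) = av (Φ v) t := by
    intro v t
    refine shift_lemma R ω hRode (max C 0) hB0 hωB t₀ τp hper v (Φ v) ?_ t
    rw [hΦdef]
    simp only [Matrix.mulVec_mulVec]
    rw [← Matrix.mul_assoc, hR₀orth, Matrix.one_mul]
  have hΦSu : ∀ v, ∑ i, (Φ v i)^2 = ∑ i, v i ^2 := by
    intro v
    calc ∑ i, (Φ v i)^2 = ∑ i, ((R (t₀ + τp))ᵀ *ᵥ v) i ^2 :=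
          sumSq_mulVec_eq (R t₀) hR₀orth _
      _ = ∑ i, v i ^2 := hsumsq v (t₀ + τp)
  have hΨSu : ∀ v, ∑ i, (Ψ v i)^2 = ∑ i, v i ^2 := by
    intro v
    calc ∑ i, (Ψ v i)^2 = ∑ i, ((R t₀)ᵀ *ᵥ v) i ^2 :=
          sumSq_mulVec_eq (R (t₀ + τp)) hort2 _
      _ = ∑ i, v i ^2 := hsumsq v t₀
  have hΦΨ : ∀ v, Φ (Ψ v) = v := by
    intro v
    rw [hΦdef, hΨdef]
    simp only [Matrix.mulVec_mulVec]
    rw [← Matrix.mul_assoc, ← Matrix.mul_assoc]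
    rw [Matrix.mul_assoc (R t₀) _ _, hort2, Matrix.mul_one, hRRT, Matrix.one_mulVec]
  -- the unit sphere
  set Su : Set (Fin 3 → ℝ) := {v | ∑ i, v i ^2 = 1} with hSudef
  have hSucont : Continuous fun v : Fin 3 → ℝ => ∑ i, v i ^2 :=
    continuous_finset_sum _ fun i _ => (continuous_apply i).pow 2
  have hSucomp : IsCompact Su := by
    rw [Metric.isCompact_iff_isClosed_bounded]
    constructor
    · exact isClosed_eq hSucont continuous_const
    · apply Bornology.IsBounded.subset (Metric.isBounded_closedBall (x := (0 : Fin 3 → ℝ)) (r := 1))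
      intro v hv
      rw [Metric.mem_closedBall, dist_zero_right]
      rw [pi_norm_le_iff_of_nonneg (by norm_num)]
      intro i
      have h1 : v i ^2 ≤ 1 := by
        have := Finset.single_le_sum (f := fun i => v i ^2)
          (fun i _ => sq_nonneg (v i)) (Finset.mem_univ i)
        rw [hv] at this; exact this
      have := abs_le_one_iff_mul_self_le_one.2 (by nlinarith : v i * v i ≤ 1)
      simpa using this
  -- the integral functional
  set F : ℝ × (Fin 3 → ℝ) × (Fin 3 → ℝ) → ℝ :=
    fun p => ∫ s in (0:ℝ)..τp, (av p.2.1 (p.1 + s) ⬝ᵥ p.2.2)^2 with hFdef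
  have hintcont : ∀ v x : Fin 3 → ℝ, Continuous fun s => (av v s ⬝ᵥ x)^2 := by
    intro v x
    apply Continuous.pow
    exact continuous_finset_sum _ fun i _ =>
      ((continuous_apply i).comp (havcont v)).mul continuous_const
  have hFeq : ∀ t v x, F (t, v, x) = ∫ s in t..t+τp, (av v s ⬝ᵥ x)^2 := by
    intro t v x
    have := intervalIntegral.integral_comp_add_left (a := (0:ℝ)) (b := τp)
      (f := fun s => (av v s ⬝ᵥ x)^2) t
    rw [hFdef]
    simpa using this
  have hFcont : Continuous F := by
    apply intervalIntegral.continuous_parametric_intervalIntegral_of_continuous'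
      (μ := volume) (f := fun (p : ℝ × (Fin 3 → ℝ) × (Fin 3 → ℝ)) (s : ℝ) =>
        (av p.2.1 (p.1 + s) ⬝ᵥ p.2.2)^2)
    show Continuous fun q : (ℝ × (Fin 3 → ℝ) × (Fin 3 → ℝ)) × ℝ =>
        (av q.1.2.1 (q.1.1 + q.2) ⬝ᵥ q.1.2.2)^2
    apply Continuous.pow
    have h1 : Continuous fun q : (ℝ × (Fin 3 → ℝ) × (Fin 3 → ℝ)) × ℝ =>
        av q.1.2.1 (q.1.1 + q.2) :=
      havjoint.comp ((continuous_fst.fst.add continuous_snd).prodMk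
        continuous_fst.snd.fst)
    exact continuous_finset_sum _ fun i _ =>
      ((continuous_apply i).comp h1).mul ((continuous_apply i).comp continuous_fst.snd.snd)
  -- compact maximum
  have hSu1 : (![1,0,0] : Fin 3 → ℝ) ∈ Su := by
    rw [hSudef]; simp [Set.mem_setOf_eq, Fin.sum_univ_three]
  have hKcomp : IsCompact ((Set.Icc (0:ℝ) τp) ×ˢ (Su ×ˢ Su)) :=
    isCompact_Icc.prod (hSucomp.prod hSucomp)
  have hKne : ((Set.Icc (0:ℝ) τp) ×ˢ (Su ×ˢ Su)).Nonempty :=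
    ⟨(0, ![1,0,0], ![1,0,0]), ⟨⟨le_refl 0, hτp.le⟩, hSu1, hSu1⟩⟩
  obtain ⟨p₀, hp₀K, hp₀max'⟩ := hKcomp.exists_isMaxOn hKne hFcont.continuousOn
  have hp₀max : ∀ p ∈ (Set.Icc (0:ℝ) τp) ×ˢ (Su ×ˢ Su), F p ≤ F p₀ := fun p hp => hp₀max' hp
  set m := F p₀ with hmdef
  -- pointwise strictness
  have hstrict : ∀ (t : ℝ) (v x : Fin 3 → ℝ), v ∈ Su → x ∈ Su →
      (∫ s in t..t+τp, (av v s ⬝ᵥ x)^2) < τp := by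
    intro t v x hv hx
    have hvS : ∑ i, v i ^2 = 1 := hv
    have hxS : ∑ i, x i ^2 = 1 := hx
    have hle1 : ∀ s, (av v s ⬝ᵥ x)^2 ≤ 1 := by
      intro s
      have hcs := Finset.sum_mul_sq_le_sq_mul_sq Finset.univ (fun i => av v s i) x
      calc (av v s ⬝ᵥ x)^2 = (∑ i, av v s i * x i)^2 := by rw [dotProduct]
        _ ≤ (∑ i, (av v s i)^2) * (∑ i, x i ^2) := hcs
        _ = 1 := by rw [hsumsq v s, hvS, hxS]; norm_num
    -- it suffices to find one point where the integrand is < 1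
    rcases exists_or_forall_not
      (fun s₀ => s₀ ∈ Set.Icc t (t+τp) ∧ (av v s₀ ⬝ᵥ x)^2 < 1) with ⟨s₀, hs₀, hlt⟩ | hnone
    · have hlt2 := intervalIntegral.integral_lt_integral_of_continuousOn_of_le_of_exists_lt
        (show t < t + τp by linarith) (hintcont v x).continuousOn continuousOn_const
        (fun s _ => hle1 s) ⟨s₀, hs₀, hlt⟩
      have : (∫ _ in t..t+τp, (1:ℝ)) = τp := by simp
      linarith [hlt2, this.symm.le]
    · exfalso
      -- integrand ≡ 1 on the interval
      have hone : ∀ s ∈ Set.Icc t (t+τp), (av v s ⬝ᵥ x)^2 = 1 := by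
        intro s hs
        rcases lt_or_eq_of_le (hle1 s) with h | h
        · exact absurd ⟨hs, h⟩ (hnone s)
        · exact h
      set h : ℝ → ℝ := fun s => av v s ⬝ᵥ x with hhdef
      have hhc : Continuous h := by
        apply continuous_finset_sum
        exact fun i _ => ((continuous_apply i).comp (havcont v)).mul continuous_const
      have hht : h t ^ 2 = 1 := hone t ⟨le_refl t, by linarith⟩
      have hht0 : h t ≠ 0 := by intro h0; rw [h0] at hht; norm_num at hht
      -- the sign is constant on the interval
      have hsign : ∀ s ∈ Set.Icc t (t+τp), h s = h t := by
        intro s hs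
        have h1 : h s ^2 = 1 := hone s hs
        have h2 : h s = h t ∨ h s = -(h t) := by
          have : (h s - h t) * (h s + h t) = 0 := by nlinarith [h1, hht]
          rcases mul_eq_zero.mp this with h3 | h3
          · left; linarith
          · right; linarith
        rcases h2 with h2 | h2
        · exact h2
        · exfalso
          have hts : t ≤ s := hs.1
          have h0mem : (0:ℝ) ∈ Set.uIcc (h t) (h s) := by
            rcases lt_or_gt_of_ne hht0 with hneg | hpos
            · apply Set.mem_uIcc.2; left; constructor <;> [linarith; nlinarith [hht]]
            · apply Set.mem_uIcc.2; right; constructor <;> [nlinarith [hht]; linarith]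
          obtain ⟨u, hu, hu0⟩ := intermediate_value_uIcc (hhc.continuousOn (s := Set.uIcc t s)) h0mem
          have huI : u ∈ Set.Icc t (t+τp) := by
            rw [Set.uIcc_of_le hts] at hu
            exact ⟨hu.1, le_trans hu.2 hs.2⟩
          have hcontr : h u ^ 2 = 1 := hone u huI
          rw [hu0] at hcontr; norm_num at hcontr
      -- hence `av v` is constant on the interval
      have havconst : ∀ s ∈ Set.Icc t (t+τp), av v s = h t • x := by
        intro s hs
        have e1 : ∑ i, (av v s i)^2 = 1 := by rw [hsumsq v s]; exact hvS
        have e2 : ∑ i, av v s i * x i = h t := by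
          have := hsign s hs
          rw [hhdef] at this
          simpa [dotProduct, hhdef] using this
        have hsq0 : ∑ i, (av v s i - h t * x i)^2 = 0 := by
          simp only [Fin.sum_univ_three] at e1 e2 hxS hht ⊢
          linear_combination e1 - 2*(h t)*e2 + (h t)^2*hxS - hht
        funext i
        have hterm := (Finset.sum_eq_zero_iff_of_nonneg
          (fun i _ => sq_nonneg (av v s i - h t * x i))).1 hsq0 i (Finset.mem_univ i)
        have := pow_eq_zero_iff (n := 2) (by norm_num) |>.1 hterm
        have : av v s i = h t * x i := by linarith [sub_eq_zero.mp this]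
        simpa [Pi.smul_apply, smul_eq_mul] using this
      -- so its derivative vanishes, forcing `ω ∥ x` on the interval
      have hcross0 : ∀ s ∈ Set.Ioo t (t+τp), cross3 x (ω s) = 0 := by
        intro s hs
        have h1 : HasDerivAt (av v) (cross3 (av v s) (ω s)) s := havd v s
        have h2 : HasDerivAt (av v) 0 s := by
          have hev : (fun _ : ℝ => h t • x) =ᶠ[nhds s] av v :=
            Filter.eventually_of_mem (Ioo_mem_nhds hs.1 hs.2)
              (fun u hu => (havconst u (Set.Ioo_subset_Icc_self hu)).symm)
          exact (hasDerivAt_const s (h t • x)).congr_of_eventuallyEq hev.symm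
        have h0 : cross3 (av v s) (ω s) = 0 := h1.unique h2
        rw [havconst s (Set.Ioo_subset_Icc_self hs), cross3_smul] at h0
        rcases smul_eq_zero.mp h0 with h3 | h3
        · exact absurd h3 hht0
        · exact h3
      -- pick a nonzero vector orthogonal to x
      obtain ⟨n, hn0, hnx⟩ : ∃ n : Fin 3 → ℝ, n ≠ 0 ∧ n ⬝ᵥ x = 0 := by
        by_cases hc : x 0 = 0 ∧ x 1 = 0
        · refine ⟨![1,0,0], ?_, ?_⟩
          · intro hn; have := congrFun hn 0; norm_num at this
          · simp [dotProduct, Fin.sum_univ_three, hc.1]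
        · refine ⟨![x 1, -(x 0), 0], ?_, ?_⟩
          · intro hn
            have h1 := congrFun hn 0
            have h2 := congrFun hn 1
            simp at h1 h2
            exact hc ⟨h2, h1⟩
          · simp [dotProduct, Fin.sum_univ_three]; ring
      -- n ⊥ ω on the open interval, hence everywhere by periodicity
      have hortho : ∀ s ∈ Set.Ioo t (t+τp), n ⬝ᵥ ω s = 0 := by
        intro s hs
        have := cross3_eq_zero_imp x (ω s) hxS (hcross0 s hs)
        rw [this, dotProduct_smul, smul_eq_mul, hnx, mul_zero]
      have hNcont : Continuous fun s => n ⬝ᵥ ω s := by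
        apply continuous_finset_sum
        exact fun i _ => continuous_const.mul ((continuous_apply i).comp hωcont)
      have hIcc0 : ∀ s ∈ Set.Icc t (t+τp), n ⬝ᵥ ω s = 0 := by
        have hcl : closure (Set.Ioo t (t+τp)) = Set.Icc t (t+τp) :=
          closure_Ioo (by intro h0; linarith : t ≠ t + τp)
        have heq : Set.EqOn (fun s => n ⬝ᵥ ω s) (fun _ => (0:ℝ))
            (closure (Set.Ioo t (t+τp))) :=
          Set.EqOn.closure (fun s hs => hortho s hs) hNcont continuous_const
        intro s hs
        exact heq (hcl ▸ hs)
      have hall : ∀ s, n ⬝ᵥ ω s = 0 := by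
        intro s
        have hmod := toIcoMod_mem_Ico hτp t s
        have hperN : Function.Periodic (fun u => n ⬝ᵥ ω u) τp := fun u => by
          simp only [hper u]
        have h2 := hperN.sub_zsmul_eq (toIcoDiv hτp t s) (x := s)
        rw [self_sub_toIcoDiv_zsmul] at h2
        rw [← h2]
        exact hIcc0 _ ⟨hmod.1, hmod.2.le⟩
      exact hnonplanar ⟨n, 0, hn0, hall⟩
  have haringSu : aring ∈ Su := by
    rw [hSudef, Set.mem_setOf_eq]
    have h1 : Real.sqrt (∑ i, aring i ^2) = 1 := haring
    exact Real.sqrt_eq_one.mp h1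
  have hmlt : m < τp := by
    rw [hmdef]
    have : F p₀ = F (p₀.1, p₀.2.1, p₀.2.2) := rfl
    rw [this, hFeq]
    exact hstrict _ _ _ hp₀K.2.1 hp₀K.2.2
  have hm0 : (0:ℝ) ≤ m := by
    rw [hmdef, hFdef]
    exact intervalIntegral.integral_nonneg hτp.le (fun u _ => sq_nonneg _)
  -- the key bound, extended to all of ℝ by ℤ-induction
  have key : ∀ (n : ℤ), ∀ t ∈ Set.Icc (0:ℝ) τp, ∀ v x : Fin 3 → ℝ, v ∈ Su → x ∈ Su →
      (∫ s in (t + (n:ℝ) * τp)..(t + (n:ℝ) * τp + τp), (av v s ⬝ᵥ x)^2) ≤ m := by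
    intro n
    induction n using Int.induction_on with
    | zero =>
      intro t ht v x hv hx
      have h1 := hp₀max (t, v, x) ⟨ht, hv, hx⟩
      rw [hFeq] at h1
      simpa using h1
    | succ k ih =>
      intro t ht v x hv hx
      have hre := intervalIntegral.integral_comp_add_right
        (a := t + (k:ℝ) * τp) (b := t + (k:ℝ) * τp + τp)
        (f := fun s => (av v s ⬝ᵥ x)^2) τp
      have hb1 : t + ((k:ℤ)+1 : ℤ) * τp = (t + (k:ℝ) * τp) + τp := by push_cast; ring
      have hb2 : t + ((k:ℤ)+1 : ℤ) * τp + τp = (t + (k:ℝ) * τp + τp) + τp := by push_cast; ring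
      rw [show ((((k:ℤ)+1 : ℤ) : ℝ)) = ((k:ℝ) + 1) by push_cast; ring]
      have hgoal : (∫ s in (t + ((k:ℝ)+1) * τp)..(t + ((k:ℝ)+1) * τp + τp), (av v s ⬝ᵥ x)^2)
          = ∫ s in (t + (k:ℝ) * τp)..(t + (k:ℝ) * τp + τp), (av v (s + τp) ⬝ᵥ x)^2 := by
        rw [hre]; congr 1 <;> ring
      rw [hgoal]
      have h2 : Set.EqOn (fun s => (av v (s + τp) ⬝ᵥ x)^2) (fun s => (av (Φ v) s ⬝ᵥ x)^2)
          (Set.uIcc (t + (k:ℝ) * τp) (t + (k:ℝ) * τp + τp)) := by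
        intro s _; simp only [hshift v s]
      rw [intervalIntegral.integral_congr h2]
      exact ih t ht (Φ v) x (by rw [hSudef, Set.mem_setOf_eq, hΦSu]; exact hv) hx
    | pred k ih =>
      intro t ht v x hv hx
      have h2 : Set.EqOn (fun s => (av v s ⬝ᵥ x)^2) (fun s => (av (Ψ v) (s + τp) ⬝ᵥ x)^2)
          (Set.uIcc (t + ((-(k:ℝ))-1) * τp) (t + ((-(k:ℝ))-1) * τp + τp)) := by
        intro s _
        simp only [hshift (Ψ v) s, hΦΨ v]
      have hre := intervalIntegral.integral_comp_add_right
        (a := t + ((-(k:ℝ))-1) * τp) (b := t + ((-(k:ℝ))-1) * τp + τp)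
        (f := fun s => (av (Ψ v) s ⬝ᵥ x)^2) τp
      rw [show (((-(k:ℤ)-1 : ℤ)) : ℝ) = ((-(k:ℝ))-1) by push_cast; ring]
      rw [intervalIntegral.integral_congr h2, hre]
      have hb1 : t + ((-(k:ℝ))-1) * τp + τp = t + ((-(k:ℤ) : ℤ):ℝ) * τp := by push_cast; ring
      rw [hb1]
      exact ih t ht (Ψ v) x (by rw [hSudef, Set.mem_setOf_eq, hΨSu]; exact hv) hx
  have hbound : ∀ (t : ℝ) (x : Fin 3 → ℝ), x ∈ Su →
      (∫ s in t..t+τp, (av aring s ⬝ᵥ x)^2) ≤ m := by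
    intro t x hx
    have hmod := toIcoMod_mem_Ico' hτp t
    have h2 := self_sub_toIcoDiv_zsmul hτp 0 t
    have h3 : (toIcoDiv hτp 0 t) • τp = ((toIcoDiv hτp 0 t : ℤ) : ℝ) * τp := zsmul_eq_mul _ _
    have hrepr : t = toIcoMod hτp 0 t + ((toIcoDiv hτp 0 t : ℤ) : ℝ) * τp := by
      rw [h3] at h2; linarith
    rw [hrepr]
    exact key (toIcoDiv hτp 0 t) (toIcoMod hτp 0 t) ⟨hmod.1, hmod.2.le⟩ aring x haringSu hx
  -- choose the parameters
  refine ⟨τp, min (1 - m/τp) (1/2), hτp, ?_, ?_, ?_⟩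
  · apply lt_min _ one_half_pos
    have : m / τp < 1 := (div_lt_one hτp).2 hmlt
    linarith
  · exact lt_of_le_of_lt (min_le_right _ _) (by norm_num)
  -- the PE property
  intro t
  set μv : ℝ := min (1 - m/τp) (1/2) with hμdef
  have hμle : μv ≤ 1 - m/τp := min_le_left _ _
  have haav : a = av aring := funext fun u => ha u
  have hacont : Continuous a := by rw [haav]; exact havcont aring
  have hak : ∀ k, Continuous fun s => a s k := fun k => (continuous_apply k).comp hacont
  set P : ℝ → Matrix (Fin 3) (Fin 3) ℝ := fun s => (skew3 (a s))ᵀ * skew3 (a s) with hPdef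
  have hskewcont : Continuous fun s => skew3 (a s) := by
    apply continuous_matrix
    intro i j
    fin_cases i <;> fin_cases j <;> simp only [skew3] <;>
      simp <;>
      first
        | exact continuous_const
        | exact hak 0 | exact hak 1 | exact hak 2
        | exact (hak 0).neg | exact (hak 1).neg | exact (hak 2).neg
  have hPcont : Continuous P := hskewcont.matrix_transpose.matrix_mul hskewcont
  have hPint := hPcont.intervalIntegrable (μ := volume) t (t + τp)
  set N := ∫ s in t..t+τp, P s with hNdef
  have hNshow : (∫ τ' in t..t+τp, (skew3 (a τ'))ᵀ * skew3 (a τ')) = N := rfl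
  have hNent : ∀ i j, N i j = ∫ s in t..t+τp, P s i j := by
    intro i j
    have hL := (((ContinuousLinearMap.proj (R := ℝ) (φ := fun _ : Fin 3 => ℝ) j).comp
      (ContinuousLinearMap.proj (R := ℝ)
        (φ := fun _ : Fin 3 => (Fin 3 → ℝ)) i))).intervalIntegral_comp_comm hPint
    exact hL.symm
  have hPsymm : ∀ (s : ℝ) i j, P s i j = P s j i := by
    intro s i j
    rw [hPdef]
    simp [Matrix.mul_apply, Matrix.transpose_apply, mul_comm]
  rw [posSemidef_iff_dotProduct_mulVec]
  constructor
  · -- Hermitian part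
    show _ᴴ = _
    ext i j
    simp only [Matrix.conjTranspose_apply, Matrix.sub_apply, Matrix.smul_apply,
      smul_eq_mul, star_trivial]
    have h1 : N j i = N i j := by
      rw [hNent j i, hNent i j]
      exact intervalIntegral.integral_congr (fun s _ => hPsymm s j i)
    have h2 : (1 : Matrix (Fin 3) (Fin 3) ℝ) j i = (1 : Matrix (Fin 3) (Fin 3) ℝ) i j := by
      by_cases hij : i = j
      · rw [hij]
      · rw [Matrix.one_apply_ne hij, Matrix.one_apply_ne (Ne.symm hij)]
    rw [h1, h2]
  · -- quadratic form part
    intro x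
    have hstar : star x = x := by funext i; simp
    rw [hstar]
    set c := ∑ i, x i ^2 with hcdef
    have hc0 : (0:ℝ) ≤ c := Finset.sum_nonneg fun i _ => sq_nonneg _
    have hxx : x ⬝ᵥ x = c := by
      rw [hcdef, dotProduct]
      exact Finset.sum_congr rfl fun i _ => (sq (x i)).symm
    have hNq : x ⬝ᵥ (N *ᵥ x) = ∫ s in t..t+τp, x ⬝ᵥ (P s *ᵥ x) := by
      set L : Matrix (Fin 3) (Fin 3) ℝ →L[ℝ] ℝ :=
        ∑ i : Fin 3, ∑ j : Fin 3, (x i * x j) •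
          ((ContinuousLinearMap.proj (R := ℝ) (φ := fun _ : Fin 3 => ℝ) j).comp
            (ContinuousLinearMap.proj (R := ℝ)
              (φ := fun _ : Fin 3 => (Fin 3 → ℝ)) i)) with hLdef
      have hLap : ∀ A : Matrix (Fin 3) (Fin 3) ℝ, L A = x ⬝ᵥ (A *ᵥ x) := by
        intro A
        have h1 : L A = ∑ i : Fin 3, ∑ j : Fin 3, x i * x j * A i j := by
          rw [hLdef]
          simp only [ContinuousLinearMap.sum_apply, ContinuousLinearMap.smul_apply,
            ContinuousLinearMap.comp_apply, smul_eq_mul]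
          rfl
        rw [h1]
        simp [dotProduct, Matrix.mulVec, Fin.sum_univ_three]
        ring
      have hL := L.intervalIntegral_comp_comm hPint
      calc x ⬝ᵥ (N *ᵥ x) = L N := (hLap N).symm
        _ = ∫ s in t..t+τp, L (P s) := hL.symm
        _ = ∫ s in t..t+τp, x ⬝ᵥ (P s *ᵥ x) :=
            intervalIntegral.integral_congr (fun s _ => hLap (P s))
    have haS : ∀ s, ∑ i, (a s i)^2 = 1 := by
      intro s
      rw [haav, hsumsq aring s]
      exact haringSu
    have hquad : ∀ s, x ⬝ᵥ (P s *ᵥ x) = c - (a s ⬝ᵥ x)^2 := by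
      intro s
      rw [hPdef]
      rw [quad_form (a s) x, haS s, hcdef]
      ring
    have hintax : Continuous fun s => (a s ⬝ᵥ x)^2 := by
      rw [haav]; exact hintcont aring x
    have hsplit : x ⬝ᵥ (N *ᵥ x) = τp * c - ∫ s in t..t+τp, (a s ⬝ᵥ x)^2 := by
      rw [hNq, intervalIntegral.integral_congr (fun s _ => hquad s)]
      rw [intervalIntegral.integral_sub intervalIntegrable_const
        (hintax.intervalIntegrable _ _)]
      rw [intervalIntegral.integral_const]
      simp only [smul_eq_mul]
      ring
    have hIle : (∫ s in t..t+τp, (a s ⬝ᵥ x)^2) ≤ m * c := by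
      rcases eq_or_lt_of_le hc0 with hczero | hcpos
      · have hx0 : x = 0 := by
          funext i
          have hle := Finset.single_le_sum (f := fun i => x i ^2)
            (fun i _ => sq_nonneg (x i)) (Finset.mem_univ i)
          rw [← hcdef, ← hczero] at hle
          have : x i ^2 = 0 := le_antisymm hle (sq_nonneg _)
          exact pow_eq_zero_iff (n := 2) (by norm_num) |>.1 this
        rw [hx0]
        simp [← hczero]
      · set ch := Real.sqrt c with hchdef
        have hch : ch^2 = c := Real.sq_sqrt hc0
        have hchpos : 0 < ch := Real.sqrt_pos.2 hcpos
        have hxhat : (ch⁻¹ • x) ∈ Su := by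
          rw [hSudef, Set.mem_setOf_eq]
          have : ∀ i, (ch⁻¹ • x) i ^2 = (ch⁻¹)^2 * x i ^2 := by
            intro i; simp [Pi.smul_apply, smul_eq_mul]; ring
          rw [Finset.sum_congr rfl fun i _ => this i, ← Finset.mul_sum, ← hcdef]
          field_simp
          linarith [hch]
        have hcchi : c * (ch⁻¹)^2 = 1 := by
          field_simp
          linarith [hch]
        have heq2 : ∀ s, (a s ⬝ᵥ x)^2 = c * (a s ⬝ᵥ (ch⁻¹ • x))^2 := by
          intro s
          rw [dotProduct_smul, smul_eq_mul]
          linear_combination (-((a s ⬝ᵥ x)^2)) * hcchi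
        calc (∫ s in t..t+τp, (a s ⬝ᵥ x)^2)
            = ∫ s in t..t+τp, c * (a s ⬝ᵥ (ch⁻¹ • x))^2 :=
              intervalIntegral.integral_congr (fun s _ => heq2 s)
          _ = c * ∫ s in t..t+τp, (a s ⬝ᵥ (ch⁻¹ • x))^2 :=
              intervalIntegral.integral_const_mul c _
          _ = c * ∫ s in t..t+τp, (av aring s ⬝ᵥ (ch⁻¹ • x))^2 := by rw [haav]
          _ ≤ c * m := mul_le_mul_of_nonneg_left (hbound t _ hxhat) hc0
          _ = m * c := mul_comm _ _
    have hexpand : x ⬝ᵥ (((τp:ℝ)⁻¹ • N - μv • (1 : Matrix (Fin 3) (Fin 3) ℝ)) *ᵥ x)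
        = τp⁻¹ * (x ⬝ᵥ (N *ᵥ x)) - μv * c := by
      rw [Matrix.sub_mulVec, dotProduct_sub, Matrix.smul_mulVec, dotProduct_smul,
        Matrix.smul_mulVec, dotProduct_smul, Matrix.one_mulVec, hxx, smul_eq_mul,
        smul_eq_mul]
    rw [hexpand, hsplit]
    have hτpinv : (0:ℝ) < τp⁻¹ := inv_pos.2 hτp
    have hstep1 : μv * c ≤ (1 - m/τp) * c := mul_le_mul_of_nonneg_right hμle hc0
    have hstep2 : (1 - m/τp) * c = τp⁻¹ * (τp * c - m * c) := by
      field_simp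
    have hstep3 : τp⁻¹ * (τp * c - m * c) ≤
        τp⁻¹ * (τp * c - ∫ s in t..t+τp, (a s ⬝ᵥ x)^2) := by
      apply mul_le_mul_of_nonneg_left _ hτpinv.le
      linarith [hIle]
    linarith [hstep1, hstep2.le, hstep3]

end
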